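/- Fix reals a > b > 0, w0 > 0, w1 > 0 and λ > 0 such that w1·(a − b) > w0·a. Set δ = 1/b − 1/a, γ = w0/(2·λ·ln 2) − 1/a and ζ = (w1/w0)·δ − 1/b, and assume γ ≥ ζ. For p0, p1 ≥ 0 define L1(p0, p1) = (w0/2)·log2((1 + a·(p0 + p1))/(1 + a·p1)) + (w1/2)·log2((1 + a·p1)/(1 + b·p1)) − λ·(p0 + p1). Then L1(p0, p1) ≤ L1(γ − ζ, ζ) for all p0, p1 ≥ 0; i.e., allocating power ζ to the confidential message and γ − ζ to the common message is optimal. -/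

import Mathlib

private lemma hasDerivAt_log_affine (a t : ℝ) (h : 1 + a * t ≠ 0) :
    HasDerivAt (fun x => Real.log (1 + a * x)) (a / (1 + a * t)) t := by
  have h1 : HasDerivAt (fun x : ℝ => 1 + a * x) a t := by
    simpa using ((hasDerivAt_id t).const_mul a).const_add 1
  exact h1.log h

private lemma max_of_sign (F : ℝ → ℝ) (c : ℝ) (hc : 0 ≤ c)
    (hdiff : ∀ t : ℝ, 0 ≤ t → DifferentiableAt ℝ F t)
    (hpos : ∀ t : ℝ, 0 < t → t < c → 0 ≤ deriv F t)
    (hneg : ∀ t : ℝ, c < t → deriv F t ≤ 0) :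
    ∀ x, 0 ≤ x → F x ≤ F c := by
  intro x hx
  rcases le_total x c with h | h
  · have hmono : MonotoneOn F (Set.Icc 0 c) := by
      apply monotoneOn_of_deriv_nonneg (convex_Icc 0 c)
      · exact fun t ht => (hdiff t ht.1).continuousAt.continuousWithinAt
      · intro t ht
        rw [interior_Icc] at ht
        exact (hdiff t ht.1.le).differentiableWithinAt
      · intro t ht
        rw [interior_Icc] at ht
        exact hpos t ht.1 ht.2
    exact hmono ⟨hx, h⟩ ⟨hc, le_rfl⟩ h
  · have hanti : AntitoneOn F (Set.Icc c x) := by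
      apply antitoneOn_of_deriv_nonpos (convex_Icc c x)
      · exact fun t ht => (hdiff t (hc.trans ht.1)).continuousAt.continuousWithinAt
      · intro t ht
        rw [interior_Icc] at ht
        exact (hdiff t (hc.trans ht.1.le)).differentiableWithinAt
      · intro t ht
        rw [interior_Icc] at ht
        exact hneg t ht.1
    exact hanti ⟨le_rfl, h⟩ ⟨h, le_rfl⟩ h

set_option maxHeartbeats 1000000 in
/-- When `γ ≥ ζ`, allocating power `ζ` to the confidential message and `γ − ζ`
to the common message is optimal for the per-sub-channel Lagrangian `L1`. -/
theorem L1_max_at_split (a b w0 w1 lam : ℝ) (hb : 0 < b) (hba : b < a)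
    (hw0 : 0 < w0) (hw1 : 0 < w1) (hlam : 0 < lam)
    (hcase : w0 * a < w1 * (a - b)) :
    let δ : ℝ := 1 / b - 1 / a
    let γ : ℝ := w0 / (2 * lam * Real.log 2) - 1 / a
    let ζ : ℝ := (w1 / w0) * δ - 1 / b
    let L1 : ℝ → ℝ → ℝ := fun p0 p1 =>
      (w0 / 2) * Real.logb 2 ((1 + a * (p0 + p1)) / (1 + a * p1)) +
      (w1 / 2) * Real.logb 2 ((1 + a * p1) / (1 + b * p1)) - lam * (p0 + p1)
    ζ ≤ γ → ∀ p0 p1 : ℝ, 0 ≤ p0 → 0 ≤ p1 → L1 p0 p1 ≤ L1 (γ - ζ) ζ := by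
  intro δ γ ζ L1 hζγ p0 p1 hp0 hp1
  have ha : (0:ℝ) < a := hb.trans hba
  have hL2 : (0:ℝ) < Real.log 2 := Real.log_pos (by norm_num)
  -- positivity of ζ
  have hζpos : 0 < ζ := by
    have : ζ = (w1 * (a - b) - w0 * a) / (w0 * a * b) := by
      show (w1 / w0) * (1 / b - 1 / a) - 1 / b = _
      field_simp
    rw [this]
    apply div_pos (by linarith) (by positivity)
  have hγpos : 0 < γ := lt_of_lt_of_le hζpos hζγ
  -- key characterizations
  have hγeq : 1 + a * γ = w0 * a / (2 * lam * Real.log 2) := by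
    show 1 + a * (w0 / (2 * lam * Real.log 2) - 1 / a) = _
    field_simp
    ring
  have hγeq2 : lam * (1 + a * γ) = w0 * a / (2 * Real.log 2) := by
    rw [hγeq]; field_simp
  have hζeq : w0 * (a * b) * ζ = w1 * (a - b) - w0 * a := by
    show w0 * (a * b) * ((w1 / w0) * (1 / b - 1 / a) - 1 / b) = _
    field_simp
  set F : ℝ → ℝ := fun t => (w0 / 2) * (Real.log (1 + a * t) / Real.log 2) - lam * t with hF
  set G : ℝ → ℝ := fun p => ((w1 - w0) / 2) * (Real.log (1 + a * p) / Real.log 2)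
      - (w1 / 2) * (Real.log (1 + b * p) / Real.log 2) with hG
  -- derivative of F
  have hFd : ∀ t : ℝ, 0 ≤ t →
      HasDerivAt F ((w0 / 2) * (a / (1 + a * t) / Real.log 2) - lam) t := by
    intro t ht
    have hne : 1 + a * t ≠ 0 := by nlinarith
    have h1 := ((hasDerivAt_log_affine a t hne).div_const (Real.log 2)).const_mul (w0 / 2)
    have h2 : HasDerivAt (fun x : ℝ => lam * x) lam t := by
      simpa using (hasDerivAt_id t).const_mul lam
    exact h1.sub h2
  have hGd : ∀ t : ℝ, 0 ≤ t →
      HasDerivAt G (((w1 - w0) / 2) * (a / (1 + a * t) / Real.log 2)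
        - (w1 / 2) * (b / (1 + b * t) / Real.log 2)) t := by
    intro t ht
    have hnea : 1 + a * t ≠ 0 := by nlinarith
    have hneb : 1 + b * t ≠ 0 := by nlinarith
    have h1 := ((hasDerivAt_log_affine a t hnea).div_const (Real.log 2)).const_mul ((w1 - w0) / 2)
    have h2 := ((hasDerivAt_log_affine b t hneb).div_const (Real.log 2)).const_mul (w1 / 2)
    exact h1.sub h2
  -- F is maximized at γ
  have hFmax : ∀ x, 0 ≤ x → F x ≤ F γ := by
    apply max_of_sign F γ hγpos.le (fun t ht => (hFd t ht).differentiableAt)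
    · intro t ht htγ
      rw [(hFd t ht.le).deriv]
      have h1 : (0:ℝ) < 1 + a * t := by nlinarith
      have hkey : lam * (1 + a * t) ≤ w0 * a / (2 * Real.log 2) := by
        rw [← hγeq2]
        exact mul_le_mul_of_nonneg_left (by nlinarith) hlam.le
      rw [sub_nonneg, show (w0 / 2) * (a / (1 + a * t) / Real.log 2)
          = (w0 * a) / (2 * Real.log 2 * (1 + a * t)) from by field_simp,
        le_div_iff₀ (by positivity)]
      have h3 : w0 * a / (2 * Real.log 2) * (2 * Real.log 2) = w0 * a :=
        div_mul_cancel₀ _ (by positivity)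
      nlinarith [mul_le_mul_of_nonneg_right hkey (by positivity : (0:ℝ) ≤ 2 * Real.log 2)]
    · intro t htγ
      have ht : (0:ℝ) ≤ t := hγpos.le.trans htγ.le
      rw [(hFd t ht).deriv]
      have h1 : (0:ℝ) < 1 + a * t := by nlinarith
      have hkey : w0 * a / (2 * Real.log 2) ≤ lam * (1 + a * t) := by
        rw [← hγeq2]
        exact mul_le_mul_of_nonneg_left (by nlinarith) hlam.le
      rw [sub_nonpos, show (w0 / 2) * (a / (1 + a * t) / Real.log 2)
          = (w0 * a) / (2 * Real.log 2 * (1 + a * t)) from by field_simp,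
        div_le_iff₀ (by positivity)]
      have h3 : w0 * a / (2 * Real.log 2) * (2 * Real.log 2) = w0 * a :=
        div_mul_cancel₀ _ (by positivity)
      nlinarith [mul_le_mul_of_nonneg_right hkey (by positivity : (0:ℝ) ≤ 2 * Real.log 2)]
  -- G is maximized at ζ
  have hGmax : ∀ x, 0 ≤ x → G x ≤ G ζ := by
    apply max_of_sign G ζ hζpos.le (fun t ht => (hGd t ht).differentiableAt)
    · intro t ht htζ
      rw [(hGd t ht.le).deriv]
      have h1 : (0:ℝ) < 1 + a * t := by nlinarith
      have h2 : (0:ℝ) < 1 + b * t := by nlinarith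
      rw [show ((w1 - w0) / 2) * (a / (1 + a * t) / Real.log 2)
            - (w1 / 2) * (b / (1 + b * t) / Real.log 2)
          = ((w1 - w0) * a * (1 + b * t) - w1 * b * (1 + a * t))
            / (2 * Real.log 2 * ((1 + a * t) * (1 + b * t))) from by field_simp]
      apply div_nonneg _ (by positivity)
      nlinarith [mul_le_mul_of_nonneg_left htζ.le (by positivity : (0:ℝ) ≤ w0 * (a * b))]
    · intro t htζ
      have ht : (0:ℝ) ≤ t := hζpos.le.trans htζ.le
      rw [(hGd t ht).deriv]
      have h1 : (0:ℝ) < 1 + a * t := by nlinarith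
      have h2 : (0:ℝ) < 1 + b * t := by nlinarith
      rw [show ((w1 - w0) / 2) * (a / (1 + a * t) / Real.log 2)
            - (w1 / 2) * (b / (1 + b * t) / Real.log 2)
          = ((w1 - w0) * a * (1 + b * t) - w1 * b * (1 + a * t))
            / (2 * Real.log 2 * ((1 + a * t) * (1 + b * t))) from by field_simp]
      rw [div_nonpos_iff]
      right
      constructor
      · nlinarith [mul_le_mul_of_nonneg_left htζ.le (by positivity : (0:ℝ) ≤ w0 * (a * b))]
      · positivity
  -- decomposition
  have hdecomp : ∀ q0 q1 : ℝ, 0 ≤ q0 → 0 ≤ q1 → L1 q0 q1 = F (q0 + q1) + G q1 := by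
    intro q0 q1 hq0 hq1
    have h1 : (0:ℝ) < 1 + a * (q0 + q1) := by nlinarith
    have h2 : (0:ℝ) < 1 + a * q1 := by nlinarith
    have h3 : (0:ℝ) < 1 + b * q1 := by nlinarith
    show (w0 / 2) * Real.logb 2 _ + (w1 / 2) * Real.logb 2 _ - lam * (q0 + q1) = _
    rw [Real.logb, Real.logb, Real.log_div h1.ne' h2.ne', Real.log_div h2.ne' h3.ne']
    simp only [hF, hG]
    ring
  rw [hdecomp p0 p1 hp0 hp1, hdecomp (γ - ζ) ζ (by linarith) hζpos.le,
    sub_add_cancel]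
  have := hFmax (p0 + p1) (by linarith)
  have := hGmax p1 hp1
  linarith
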